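/- Fix n ≥ 2 and a countably infinite type C of constants, and let tuples be pairs (i,c) ∈ {1,…,n} × C. Let Q_n be the Boolean query with Q_n[W] = 1 iff for every i ∈ {1,…,n} there exists c ∈ C with (i,c) ∈ W (the multi-component Boolean conjunctive query ∃x_1 … ∃x_n (R_1(x_1) ∧ … ∧ R_n(x_n)), one unary atom per component). Then for every finite instance D of such tuples and every partition of D into endogenous tuples D^en and exogenous tuples D^ex, the scores CE and ρ are aligned for (Q_n, D). -/

import Mathlib

open Finset

attribute [local instance] Classical.propDecidable

noncomputable section

variable {α : Type*} [DecidableEq α]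

/-- The causal-effect score (= Banzhaf power index):
`CE(D,Q,τ) = 2^{-(|Dᵉⁿ|-1)} · Σ_{S ⊆ Dᵉⁿ∖{τ}} (Q[S ∪ Dᵉˣ ∪ {τ}] − Q[S ∪ Dᵉˣ])`. -/
def ceScore (Q : Finset α → ℕ) (Den Dex : Finset α) (τ : α) : ℝ :=
  (∑ S ∈ (Den.erase τ).powerset,
      ((Q (S ∪ Dex ∪ {τ}) : ℝ) - (Q (S ∪ Dex) : ℝ))) / 2 ^ (Den.card - 1)

/-- The Shapley value of an endogenous tuple. -/
def shapleyScore (Q : Finset α → ℕ) (Den Dex : Finset α) (τ : α) : ℝ :=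
  ∑ S ∈ (Den.erase τ).powerset,
    (((S.card.factorial : ℝ) * ((Den.card - S.card - 1).factorial : ℝ)) /
        (Den.card.factorial : ℝ)) *
      ((Q (S ∪ Dex ∪ {τ}) : ℝ) - (Q (S ∪ Dex) : ℝ))

/-- Responsibility: `1/(1+m)` where `m` is the minimum cardinality of a contingency set
for `τ`, and `0` if `τ` has no contingency set. -/
def respScore (Q : Finset α → ℕ) (D Den : Finset α) (τ : α) : ℝ :=
  if ∃ Γ ⊆ Den.erase τ, Q (D \ Γ) = 1 ∧ Q (D \ insert τ Γ) = 0 then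
    1 / (1 + ((sInf {n : ℕ | ∃ Γ ⊆ Den.erase τ,
        Γ.card = n ∧ Q (D \ Γ) = 1 ∧ Q (D \ insert τ Γ) = 0} : ℕ) : ℝ))
  else 0

/-- Probability of the Boolean query `Q` under the uniform-1/2 tuple-independent
distribution on an instance with endogenous part `Een` and exogenous part `Eex`. -/
def probQ (Q : Finset α → ℕ) (Een Eex : Finset α) : ℝ :=
  ((Een.powerset.filter (fun S => Q (S ∪ Eex) = 1)).card : ℝ) / 2 ^ Een.card

/-- Two scores are aligned on the endogenous tuples. -/
def scoresAligned (sc1 sc2 : α → ℝ) (Den : Finset α) : Prop :=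
  ∀ τ ∈ Den, ∀ τ' ∈ Den, (sc1 τ ≤ sc1 τ' ↔ sc2 τ ≤ sc2 τ')


/-- The multi-component Boolean conjunctive query
`∃x_1…∃x_n (R_1(x_1) ∧ … ∧ R_n(x_n))`, one unary atom per component. -/
def Qn (n : ℕ) (C : Type) [DecidableEq C] : Finset (Fin n × C) → ℕ :=
  fun W => if ∀ i : Fin n, ∃ c : C, (i, c) ∈ W then 1 else 0

namespace Stmt8

variable {n : ℕ} {C : Type} [DecidableEq C]

/-- coverage predicate -/
def cov (W : Finset (Fin n × C)) : Prop := ∀ i : Fin n, ∃ c : C, (i, c) ∈ W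

lemma Qn_one {W : Finset (Fin n × C)} : Qn n C W = 1 ↔ cov W := by
  unfold Qn cov; split <;> simp_all

lemma Qn_zero {W : Finset (Fin n × C)} : Qn n C W = 0 ↔ ¬ cov W := by
  unfold Qn cov; split <;> simp_all

lemma cov_mono {W W' : Finset (Fin n × C)} (h : W ⊆ W') (hc : cov W) : cov W' :=
  fun i => (hc i).imp fun _ hm => h hm

end Stmt8

section
set_option linter.unusedSectionVars false
variable {n : ℕ} {C : Type} [DecidableEq C]
open Stmt8

/-- The CE sum counts the sets where τ is a counterfactual cause. -/
lemma ce_eq_card (Den Dex : Finset (Fin n × C)) (τ : Fin n × C) :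
    ceScore (Qn n C) Den Dex τ =
      (((Den.erase τ).powerset.filter
          (fun S => cov (S ∪ Dex ∪ {τ}) ∧ ¬ cov (S ∪ Dex))).card : ℝ) / 2 ^ (Den.card - 1) := by
  unfold ceScore
  congr 1
  rw [Finset.card_filter]
  push_cast
  refine Finset.sum_congr rfl fun S _ => ?_
  by_cases hs : cov (S ∪ Dex)
  · have hb : cov (S ∪ Dex ∪ {τ}) := cov_mono Finset.subset_union_left hs
    rw [Qn_one.mpr hs, Qn_one.mpr hb, if_neg (by tauto)]
    norm_num
  · by_cases hb : cov (S ∪ Dex ∪ {τ})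
    · rw [Qn_one.mpr hb, Qn_zero.mpr hs, if_pos ⟨hb, hs⟩]
      norm_num
    · rw [Qn_zero.mpr hb, Qn_zero.mpr hs, if_neg (by tauto)]
      norm_num

/-- Characterization of counterfactual-cause sets when τ's component has no exogenous tuple. -/
lemma cause_iff {Dex : Finset (Fin n × C)} {τ : Fin n × C}
    (hE : ∀ c : C, (τ.1, c) ∉ Dex) (S : Finset (Fin n × C)) :
    (cov (S ∪ Dex ∪ {τ}) ∧ ¬ cov (S ∪ Dex)) ↔
      ((∀ j : Fin n, j ≠ τ.1 → ∃ c : C, (j, c) ∈ S ∪ Dex) ∧ ∀ c : C, (τ.1, c) ∉ S) := by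
  constructor
  · rintro ⟨hb, hs⟩
    have hoth : ∀ j : Fin n, j ≠ τ.1 → ∃ c : C, (j, c) ∈ S ∪ Dex := by
      intro j hj
      obtain ⟨c, hc⟩ := hb j
      rcases Finset.mem_union.mp hc with h | h
      · exact ⟨c, h⟩
      · exact absurd (congrArg Prod.fst (Finset.mem_singleton.mp h)) hj
    refine ⟨hoth, fun c hc => ?_⟩
    apply hs
    intro j
    by_cases hj : j = τ.1
    · exact ⟨c, by rw [hj]; exact Finset.mem_union_left _ hc⟩
    · exact hoth j hj
  · rintro ⟨hoth, hno⟩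
    constructor
    · intro j
      by_cases hj : j = τ.1
      · refine ⟨τ.2, Finset.mem_union_right _ ?_⟩
        simp [hj]
      · obtain ⟨c, hc⟩ := hoth j hj
        exact ⟨c, Finset.mem_union_left _ hc⟩
    · intro hcov
      obtain ⟨c, hc⟩ := hcov τ.1
      rcases Finset.mem_union.mp hc with h | h
      · exact hno c h
      · exact hE c h
end

section
set_option linter.unusedSectionVars false
variable {n : ℕ} {C : Type} [DecidableEq C]
open Stmt8

lemma card_M (Den Dex : Finset (Fin n × C)) (τ : Fin n × C) (hτ : τ ∈ Den)
    (hE : ∀ c : C, (τ.1, c) ∉ Dex) :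
    (Den.powerset.filter (fun S => cov (S ∪ Dex))).card =
      ((Den.erase τ).powerset.filter
          (fun S => cov (S ∪ Dex ∪ {τ}) ∧ ¬ cov (S ∪ Dex))).card *
        (2 ^ (Den.filter (fun t => t.1 = τ.1)).card - 1) := by
  classical
  set F := Den.filter (fun t => t.1 = τ.1) with hF
  have hτF : τ ∈ F := Finset.mem_filter.mpr ⟨hτ, rfl⟩
  set Nset := (Den.erase τ).powerset.filter
      (fun S => cov (S ∪ Dex ∪ {τ}) ∧ ¬ cov (S ∪ Dex)) with hN
  set Tset := F.powerset.filter (fun T => T.Nonempty) with hT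
  have hTcard : Tset.card = 2 ^ F.card - 1 := by
    have he : Tset = F.powerset.erase ∅ := by
      ext T
      simp [hT, Finset.mem_erase, Finset.nonempty_iff_ne_empty, and_comm]
    rw [he, Finset.card_erase_of_mem (Finset.empty_mem_powerset F), Finset.card_powerset]
  rw [← hTcard, ← Finset.card_product]
  apply Finset.card_bij' (fun S _ => (S \ F, S ∩ F)) (fun p _ => p.1 ∪ p.2)
  · -- hi : maps into product
    intro S hS
    rw [Finset.mem_filter, Finset.mem_powerset] at hS
    obtain ⟨hSD, hQ⟩ := hS
    rw [Finset.mem_product]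
    constructor
    · rw [hN, Finset.mem_filter, Finset.mem_powerset]
      refine ⟨?_, (cause_iff hE _).mpr ⟨?_, ?_⟩⟩
      · intro x hx
        rw [Finset.mem_sdiff] at hx
        exact Finset.mem_erase.mpr ⟨fun h => hx.2 (h ▸ hτF), hSD hx.1⟩
      · intro j hj
        obtain ⟨c, hc⟩ := hQ j
        rcases Finset.mem_union.mp hc with h | h
        · refine ⟨c, Finset.mem_union_left _ (Finset.mem_sdiff.mpr ⟨h, fun hmem => ?_⟩)⟩
          exact hj (Finset.mem_filter.mp hmem).2
        · exact ⟨c, Finset.mem_union_right _ h⟩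
      · intro c hc
        rw [Finset.mem_sdiff] at hc
        exact hc.2 (Finset.mem_filter.mpr ⟨hSD hc.1, rfl⟩)
    · rw [hT, Finset.mem_filter, Finset.mem_powerset]
      refine ⟨Finset.inter_subset_right, ?_⟩
      obtain ⟨c, hc⟩ := hQ τ.1
      rcases Finset.mem_union.mp hc with h | h
      · exact ⟨(τ.1, c), Finset.mem_inter.mpr ⟨h, Finset.mem_filter.mpr ⟨hSD h, rfl⟩⟩⟩
      · exact absurd h (hE c)
  · -- hj : inverse maps into Mset
    rintro ⟨S', T⟩ hp
    rw [Finset.mem_product] at hp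
    obtain ⟨hS', hTm⟩ := hp
    rw [hN, Finset.mem_filter, Finset.mem_powerset] at hS'
    rw [hT, Finset.mem_filter, Finset.mem_powerset] at hTm
    obtain ⟨hS'D, hcause⟩ := hS'
    obtain ⟨hoth, hno⟩ := (cause_iff hE _).mp hcause
    obtain ⟨hTF, t, ht⟩ := hTm
    rw [Finset.mem_filter, Finset.mem_powerset]
    constructor
    · exact Finset.union_subset (hS'D.trans (Finset.erase_subset _ _))
        (hTF.trans (Finset.filter_subset _ _))
    · intro j
      by_cases hj : j = τ.1
      · have htF := hTF ht
        rw [hF, Finset.mem_filter] at htF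
        refine ⟨t.2, Finset.mem_union_left _ (Finset.mem_union_right _ ?_)⟩
        have : (j, t.2) = t := by rw [hj, ← htF.2]
        rw [this]; exact ht
      · obtain ⟨c, hc⟩ := hoth j hj
        rcases Finset.mem_union.mp hc with h | h
        · exact ⟨c, Finset.mem_union_left _ (Finset.mem_union_left _ h)⟩
        · exact ⟨c, Finset.mem_union_right _ h⟩
  · -- left inverse
    intro S hS
    exact Finset.sdiff_union_inter S F
  · -- right inverse
    rintro ⟨S', T⟩ hp
    rw [Finset.mem_product] at hp
    obtain ⟨hS', hTm⟩ := hp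
    rw [hN, Finset.mem_filter, Finset.mem_powerset] at hS'
    rw [hT, Finset.mem_filter, Finset.mem_powerset] at hTm
    obtain ⟨hS'D, hcause⟩ := hS'
    obtain ⟨-, hno⟩ := (cause_iff hE _).mp hcause
    have hS'F : ∀ x ∈ S', x ∉ F := by
      intro x hx hxF
      rw [hF, Finset.mem_filter] at hxF
      have : (τ.1, x.2) ∈ S' := by
        have : x = (τ.1, x.2) := by rw [← hxF.2]
        rwa [this] at hx
      exact hno x.2 this
    have h1 : (S' ∪ T) \ F = S' := by
      ext x
      simp only [Finset.mem_sdiff, Finset.mem_union]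
      constructor
      · rintro ⟨h | h, hnF⟩
        · exact h
        · exact absurd (hTm.1 h) hnF
      · intro h
        exact ⟨Or.inl h, hS'F x h⟩
    have h2 : (S' ∪ T) ∩ F = T := by
      ext x
      simp only [Finset.mem_inter, Finset.mem_union]
      constructor
      · rintro ⟨h | h, hxF⟩
        · exact absurd hxF (hS'F x h)
        · exact h
      · intro h
        exact ⟨Or.inr h, hTm.1 h⟩
    dsimp only
    rw [h1, h2]
end

section
set_option linter.unusedSectionVars false
variable {n : ℕ} {C : Type} [DecidableEq C]
open Stmt8

lemma resp_eq (Den Dex : Finset (Fin n × C)) (τ : Fin n × C) (hτ : τ ∈ Den)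
    (hcov : cov (Den ∪ Dex)) (hE : ∀ c : C, (τ.1, c) ∉ Dex) :
    respScore (Qn n C) (Den ∪ Dex) Den τ =
      1 / ((Den.filter (fun t => t.1 = τ.1)).card : ℝ) := by
  classical
  set D := Den ∪ Dex with hD
  set F := Den.filter (fun t => t.1 = τ.1) with hF
  have hτF : τ ∈ F := Finset.mem_filter.mpr ⟨hτ, rfl⟩
  have hk : 1 ≤ F.card := Finset.card_pos.mpr ⟨τ, hτF⟩
  -- the canonical minimum contingency set
  set Γ0 := F.erase τ with hΓ0
  have hsub : Γ0 ⊆ Den.erase τ := by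
    intro x hx
    rw [hΓ0, Finset.mem_erase] at hx
    exact Finset.mem_erase.mpr ⟨hx.1, (Finset.mem_filter.mp hx.2).1⟩
  have hQ1 : Qn n C (D \ Γ0) = 1 := by
    rw [Qn_one]
    intro j
    by_cases hj : j = τ.1
    · refine ⟨τ.2, Finset.mem_sdiff.mpr ⟨?_, ?_⟩⟩
      · have : (j, τ.2) = τ := by rw [hj]
        rw [this]; exact Finset.mem_union_left _ hτ
      · have : (j, τ.2) = τ := by rw [hj]
        rw [this, hΓ0]
        exact Finset.notMem_erase τ F
    · obtain ⟨c, hc⟩ := hcov j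
      refine ⟨c, Finset.mem_sdiff.mpr ⟨hc, fun hmem => ?_⟩⟩
      rw [hΓ0, Finset.mem_erase, hF, Finset.mem_filter] at hmem
      exact hj hmem.2.2
  have hQ0 : Qn n C (D \ insert τ Γ0) = 0 := by
    rw [Qn_zero]
    intro hc
    obtain ⟨c, hcm⟩ := hc τ.1
    rw [Finset.mem_sdiff] at hcm
    obtain ⟨hcD, hcni⟩ := hcm
    rcases Finset.mem_union.mp hcD with h | h
    · have hcF : ((τ.1 : Fin n), c) ∈ F := Finset.mem_filter.mpr ⟨h, rfl⟩
      by_cases heq : ((τ.1 : Fin n), c) = τ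
      · exact hcni (heq ▸ Finset.mem_insert_self τ Γ0)
      · exact hcni (Finset.mem_insert_of_mem (Finset.mem_erase.mpr ⟨heq, hcF⟩))
    · exact hE c h
  -- lower bound : every contingency set contains F.erase τ
  have hlow : ∀ Γ ⊆ Den.erase τ, Qn n C (D \ Γ) = 1 → Qn n C (D \ insert τ Γ) = 0 →
      F.card - 1 ≤ Γ.card := by
    intro Γ hΓsub h1 h0
    have hcovΓ := Qn_one.mp h1
    have hncov := Qn_zero.mp h0
    rw [cov] at hncov
    push_neg at hncov
    obtain ⟨j, hj⟩ := hncov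
    have hjτ : j = τ.1 := by
      by_contra hne
      obtain ⟨c, hc⟩ := hcovΓ j
      rw [Finset.mem_sdiff] at hc
      refine hj c (Finset.mem_sdiff.mpr ⟨hc.1, fun hmem => ?_⟩)
      rcases Finset.mem_insert.mp hmem with h | h
      · exact hne (congrArg Prod.fst h)
      · exact hc.2 h
    have hss : F.erase τ ⊆ Γ := by
      intro x hx
      rw [Finset.mem_erase, hF, Finset.mem_filter] at hx
      obtain ⟨hxτ, hxDen, hx1⟩ := hx
      by_contra hxΓ
      refine hj x.2 (Finset.mem_sdiff.mpr ⟨?_, ?_⟩)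
      · have : (j, x.2) = x := by rw [hjτ, ← hx1]
        rw [this]; exact Finset.mem_union_left _ hxDen
      · have : (j, x.2) = x := by rw [hjτ, ← hx1]
        rw [this]
        intro hmem
        rcases Finset.mem_insert.mp hmem with h | h
        · exact hxτ h
        · exact hxΓ h
    calc F.card - 1 = (F.erase τ).card := (Finset.card_erase_of_mem hτF).symm
      _ ≤ Γ.card := Finset.card_le_card hss
  -- evaluate respScore
  have hex : ∃ Γ ⊆ Den.erase τ, Qn n C (D \ Γ) = 1 ∧ Qn n C (D \ insert τ Γ) = 0 :=
    ⟨Γ0, hsub, hQ1, hQ0⟩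
  rw [respScore, if_pos hex]
  have hinf : sInf {m : ℕ | ∃ Γ ⊆ Den.erase τ,
      Γ.card = m ∧ Qn n C (D \ Γ) = 1 ∧ Qn n C (D \ insert τ Γ) = 0} = F.card - 1 := by
    apply le_antisymm
    · apply Nat.sInf_le
      refine ⟨Γ0, hsub, ?_, hQ1, hQ0⟩
      rw [hΓ0, Finset.card_erase_of_mem hτF]
    · apply le_csInf
      · exact ⟨Γ0.card, Γ0, hsub, rfl, hQ1, hQ0⟩
      · rintro m ⟨Γ, hΓsub, hcard, h1, h0⟩
        exact hcard ▸ hlow Γ hΓsub h1 h0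
  rw [hinf]
  rw [Nat.cast_sub hk, Nat.cast_one]
  ring_nf

lemma resp_zero_of_exo (Den Dex : Finset (Fin n × C)) (τ : Fin n × C) (hτ : τ ∈ Den)
    (hdisj : Disjoint Den Dex) (hE : ∃ c : C, (τ.1, c) ∈ Dex) :
    respScore (Qn n C) (Den ∪ Dex) Den τ = 0 := by
  rw [respScore, if_neg]
  rintro ⟨Γ, hΓsub, h1, h0⟩
  obtain ⟨c₀, hc₀⟩ := hE
  have hcov1 : cov ((Den ∪ Dex) \ insert τ Γ) := by
    intro j
    by_cases hj : j = τ.1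
    · refine ⟨c₀, Finset.mem_sdiff.mpr ⟨?_, ?_⟩⟩
      · have : (j, c₀) = (τ.1, c₀) := by rw [hj]
        rw [this]; exact Finset.mem_union_right _ hc₀
      · intro hmem
        have hden : (j, c₀) ∈ Den := by
          rcases Finset.mem_insert.mp hmem with h | h
          · exact h ▸ hτ
          · exact (Finset.erase_subset _ _) (hΓsub h)
        have : (j, c₀) ∈ Dex := by rw [hj]; exact hc₀
        exact (Finset.disjoint_left.mp hdisj hden) this
    · obtain ⟨c, hc⟩ := Qn_one.mp h1 j
      rw [Finset.mem_sdiff] at hc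
      refine ⟨c, Finset.mem_sdiff.mpr ⟨hc.1, fun hmem => ?_⟩⟩
      rcases Finset.mem_insert.mp hmem with h | h
      · exact hj (congrArg Prod.fst h)
      · exact hc.2 h
  rw [Qn_zero] at h0
  exact h0 hcov1

lemma ce_zero_of_exo (Den Dex : Finset (Fin n × C)) (τ : Fin n × C)
    (hE : ∃ c : C, (τ.1, c) ∈ Dex) :
    ceScore (Qn n C) Den Dex τ = 0 := by
  rw [ce_eq_card]
  have : (Den.erase τ).powerset.filter
      (fun S => cov (S ∪ Dex ∪ {τ}) ∧ ¬ cov (S ∪ Dex)) = ∅ := by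
    rw [Finset.filter_eq_empty_iff]
    rintro S - ⟨hb, hs⟩
    apply hs
    intro j
    by_cases hj : j = τ.1
    · obtain ⟨c₀, hc₀⟩ := hE
      exact ⟨c₀, by rw [hj]; exact Finset.mem_union_right _ hc₀⟩
    · obtain ⟨c, hc⟩ := hb j
      rcases Finset.mem_union.mp hc with h | h
      · exact ⟨c, h⟩
      · exact absurd (congrArg Prod.fst (Finset.mem_singleton.mp h)) hj
  rw [this]
  simp

lemma ce_zero_of_ncov (Den Dex : Finset (Fin n × C)) (τ : Fin n × C) (hτ : τ ∈ Den)
    (hncov : ¬ cov (Den ∪ Dex)) :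
    ceScore (Qn n C) Den Dex τ = 0 := by
  rw [ce_eq_card]
  have : (Den.erase τ).powerset.filter
      (fun S => cov (S ∪ Dex ∪ {τ}) ∧ ¬ cov (S ∪ Dex)) = ∅ := by
    rw [Finset.filter_eq_empty_iff]
    rintro S hS ⟨hb, -⟩
    rw [Finset.mem_powerset] at hS
    apply hncov
    refine cov_mono (Finset.union_subset (Finset.union_subset ?_ Finset.subset_union_right) ?_) hb
    · exact (hS.trans (Finset.erase_subset _ _)).trans Finset.subset_union_left
    · exact Finset.singleton_subset_iff.mpr (Finset.mem_union_left _ hτ)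
  rw [this]
  simp

lemma resp_zero_of_ncov (Den Dex : Finset (Fin n × C)) (τ : Fin n × C)
    (hncov : ¬ cov (Den ∪ Dex)) :
    respScore (Qn n C) (Den ∪ Dex) Den τ = 0 := by
  rw [respScore, if_neg]
  rintro ⟨Γ, hΓsub, h1, -⟩
  exact hncov (cov_mono (Finset.sdiff_subset) (Qn_one.mp h1))
end

section
set_option linter.unusedSectionVars false
variable {n : ℕ} {C : Type} [DecidableEq C]
open Stmt8

private lemma nat_cross {a b x y M : ℕ} (hax : a * x = M) (hby : b * y = M)
    (hM : 0 < M) : a ≤ b ↔ y ≤ x := by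
  have hb : 0 < b := by
    rcases Nat.eq_zero_or_pos b with h | h
    · rw [h, zero_mul] at hby; omega
    · exact h
  have hx : 0 < x := by
    rcases Nat.eq_zero_or_pos x with h | h
    · rw [h, mul_zero] at hax; omega
    · exact h
  constructor
  · intro hab
    have : b * y ≤ b * x := by
      rw [hby, ← hax]
      exact Nat.mul_le_mul_right x hab
    exact Nat.le_of_mul_le_mul_left this hb
  · intro hyx
    have : a * x ≤ b * x := by
      rw [hax, ← hby]
      exact Nat.mul_le_mul_left b hyx
    exact Nat.le_of_mul_le_mul_right this hx


/-- For `Q_n : ∃x_1…∃x_n (R_1(x_1) ∧ … ∧ R_n(x_n))` (`n ≥ 2`), the causal-effect score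
and responsibility are aligned for every instance, with or without exogenous tuples. -/
theorem stmt8 (n : ℕ) (hn : 2 ≤ n) (C : Type) [DecidableEq C] [Countable C] [Infinite C]
    (D Den Dex : Finset (Fin n × C)) (hpart : Den ∪ Dex = D) (hdisj : Disjoint Den Dex) :
    scoresAligned (ceScore (Qn n C) Den Dex) (respScore (Qn n C) D Den) Den := by
  classical
  subst hpart
  intro τ hτ τ' hτ'
  by_cases hcov : cov (Den ∪ Dex)
  · -- D covers every component
    have hMpos : 0 < (Den.powerset.filter (fun S => cov (S ∪ Dex))).card :=
      Finset.card_pos.mpr ⟨Den, Finset.mem_filter.mpr ⟨Finset.mem_powerset_self Den, hcov⟩⟩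
    set M := (Den.powerset.filter (fun S => cov (S ∪ Dex))).card with hM
    -- abbreviations
    set k1 := (Den.filter (fun t => t.1 = τ.1)).card with hk1
    set k2 := (Den.filter (fun t => t.1 = τ'.1)).card with hk2
    set N1 := ((Den.erase τ).powerset.filter
        (fun S => cov (S ∪ Dex ∪ {τ}) ∧ ¬ cov (S ∪ Dex))).card with hN1
    set N2 := ((Den.erase τ').powerset.filter
        (fun S => cov (S ∪ Dex ∪ {τ'}) ∧ ¬ cov (S ∪ Dex))).card with hN2
    by_cases hE1 : ∃ c : C, (τ.1, c) ∈ Dex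
    · by_cases hE2 : ∃ c : C, (τ'.1, c) ∈ Dex
      · rw [ce_zero_of_exo Den Dex τ hE1, ce_zero_of_exo Den Dex τ' hE2,
            resp_zero_of_exo Den Dex τ hτ hdisj hE1, resp_zero_of_exo Den Dex τ' hτ' hdisj hE2]
      · -- τ exogenous component, τ' not : both inequalities hold
        push_neg at hE2
        rw [ce_zero_of_exo Den Dex τ hE1, resp_zero_of_exo Den Dex τ hτ hdisj hE1,
            ce_eq_card Den Dex τ', resp_eq Den Dex τ' hτ' hcov hE2]
        have hk2pos : 0 < k2 := Finset.card_pos.mpr ⟨τ', Finset.mem_filter.mpr ⟨hτ', rfl⟩⟩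
        constructor
        · intro _
          positivity
        · intro _
          positivity
    · by_cases hE2 : ∃ c : C, (τ'.1, c) ∈ Dex
      · -- τ not exogenous, τ' exogenous : both inequalities fail
        push_neg at hE1
        rw [ce_zero_of_exo Den Dex τ' hE2, resp_zero_of_exo Den Dex τ' hτ' hdisj hE2,
            ce_eq_card Den Dex τ, resp_eq Den Dex τ hτ hcov hE1]
        have hk1pos : 0 < k1 := Finset.card_pos.mpr ⟨τ, Finset.mem_filter.mpr ⟨hτ, rfl⟩⟩
        have hcM1 : M = N1 * (2 ^ k1 - 1) := card_M Den Dex τ hτ hE1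
        have hN1pos : 0 < N1 := by
          rcases Nat.eq_zero_or_pos N1 with h | h
          · rw [h, zero_mul] at hcM1; omega
          · exact h
        have h1 : ¬ ((N1 : ℝ) / 2 ^ (Den.card - 1) ≤ 0) := by
          push_neg
          positivity
        have h2 : ¬ ((1 : ℝ) / (k1 : ℝ) ≤ 0) := by
          push_neg
          positivity
        exact iff_of_false h1 h2
      · -- generic case
        push_neg at hE1
        push_neg at hE2
        rw [ce_eq_card Den Dex τ, ce_eq_card Den Dex τ', resp_eq Den Dex τ hτ hcov hE1,
            resp_eq Den Dex τ' hτ' hcov hE2]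
        have hk1pos : 0 < k1 := Finset.card_pos.mpr ⟨τ, Finset.mem_filter.mpr ⟨hτ, rfl⟩⟩
        have hk2pos : 0 < k2 := Finset.card_pos.mpr ⟨τ', Finset.mem_filter.mpr ⟨hτ', rfl⟩⟩
        have hcM1 : N1 * (2 ^ k1 - 1) = M := (card_M Den Dex τ hτ hE1).symm
        have hcM2 : N2 * (2 ^ k2 - 1) = M := (card_M Den Dex τ' hτ' hE2).symm
        have key : N1 ≤ N2 ↔ k2 ≤ k1 := by
          rw [nat_cross hcM1 hcM2 hMpos]
          constructor
          · intro h
            have h1 : 0 < 2 ^ k2 := Nat.pow_pos (by norm_num)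
            have h2 : 0 < 2 ^ k1 := Nat.pow_pos (by norm_num)
            have : 2 ^ k2 ≤ 2 ^ k1 := by omega
            exact (Nat.pow_le_pow_iff_right (by norm_num)).mp this
          · intro h
            have : 2 ^ k2 ≤ 2 ^ k1 := Nat.pow_le_pow_right (by norm_num) h
            omega
        have hc : (0 : ℝ) < 2 ^ (Den.card - 1) := by positivity
        have hk1R : (0 : ℝ) < (k1 : ℝ) := by exact_mod_cast hk1pos
        have hk2R : (0 : ℝ) < (k2 : ℝ) := by exact_mod_cast hk2pos
        rw [div_le_div_iff_of_pos_right hc, Nat.cast_le, key, ← hk1, ← hk2,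
            div_le_div_iff₀ hk1R hk2R, one_mul, one_mul, Nat.cast_le]
  · -- D does not cover some component : all scores vanish
    rw [ce_zero_of_ncov Den Dex τ hτ hcov, ce_zero_of_ncov Den Dex τ' hτ' hcov,
        resp_zero_of_ncov Den Dex τ hcov, resp_zero_of_ncov Den Dex τ' hcov]

end

end
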